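/- For distinct nonzero complex numbers λ₁,…,λ_k with |λ_i| < 1 and λ_iλ_j ≠ 1 for all i,j, and for t with max|λ_i| < |t| < min|λ_i|^{-1}, the product ∏_{ℓ=1}^k (1/(1-tλ_ℓ) + (λ_ℓ/t)/(1-λ_ℓ/t)) admits the partial-fraction decomposition ∑_{j=1}^k (C_j/(1-tλ_j) + D_j/(t-λ_j)) for suitable constants C_j, D_j, where C_j = λ_j^{k-1} ∏_{ℓ≠j} (1-λ_ℓ²)/((λ_j-λ_ℓ)(1-λ_jλ_ℓ)). -/

import Mathlib

open Polynomial Finset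

/-- Auxiliary: the cleared-denominator polynomial identity, in scalar form. -/
lemma stmt3_key (k : ℕ) (hk : 1 ≤ k) (lam : Fin k → ℂ)
    (hne : ∀ i, lam i ≠ 0) (hdist : Function.Injective lam)
    (hprod : ∀ i j, lam i * lam j ≠ 1) (Cc Dd : Fin k → ℂ)
    (hC : ∀ j, Cc j = lam j ^ (k - 1) *
        ∏ l ∈ Finset.univ.erase j,
          (1 - lam l ^ 2) / ((lam j - lam l) * (1 - lam j * lam l)))
    (hD : ∀ j, Dd j = lam j ^ k * (∏ l, (1 - lam l ^ 2)) /
        ((∏ l, (1 - lam j * lam l)) * ∏ l ∈ Finset.univ.erase j, (lam j - lam l)))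
    (x : ℂ) :
    (∏ l, (1 - lam l ^ 2)) * x ^ k =
      ∑ j, (Cc j * ((∏ l, (x - lam l)) * ∏ l ∈ Finset.univ.erase j, (1 - lam l * x))
          + Dd j * ((∏ l, (1 - lam l * x)) * ∏ l ∈ Finset.univ.erase j, (x - lam l))) := by
  classical
  have h1 : ∀ i j, (1 : ℂ) - lam i * lam j ≠ 0 := fun i j => sub_ne_zero.2 (Ne.symm (hprod i j))
  have h1' : ∀ i, (1 : ℂ) - lam i ^ 2 ≠ 0 := fun i => by
    have := h1 i i; rwa [← sq] at this
  have h2 : ∀ i j : Fin k, i ≠ j → lam i - lam j ≠ 0 := fun i j h =>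
    sub_ne_zero.2 (fun e => h (hdist e))
  -- the polynomials
  set L : ℂ[X] := C (∏ l, (1 - lam l ^ 2)) * X ^ k with hL
  set R : ℂ[X] := ∑ j, (C (Cc j) * ((∏ l, (X - C (lam l))) *
        ∏ l ∈ Finset.univ.erase j, (1 - C (lam l) * X))
      + C (Dd j) * ((∏ l, (1 - C (lam l) * X)) *
        ∏ l ∈ Finset.univ.erase j, (X - C (lam l)))) with hR
  have hcardE : ∀ j : Fin k, (Finset.univ.erase j).card = k - 1 := fun j => by
    rw [Finset.card_erase_of_mem (Finset.mem_univ j)]; simp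
  -- degree bounds
  have hdeg1 : ∀ (s : Finset (Fin k)), (∏ l ∈ s, (X - C (lam l)) : ℂ[X]).natDegree ≤ s.card := by
    intro s
    refine le_trans (natDegree_prod_le _ _) ?_
    refine le_trans (Finset.sum_le_card_nsmul s _ 1 (fun l _ => ?_)) (by simp)
    rw [natDegree_X_sub_C]
  have hdeg2 : ∀ (s : Finset (Fin k)), (∏ l ∈ s, (1 - C (lam l) * X) : ℂ[X]).natDegree ≤ s.card := by
    intro s
    refine le_trans (natDegree_prod_le _ _) ?_
    refine le_trans (Finset.sum_le_card_nsmul s _ 1 (fun l _ => ?_)) (by simp)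
    refine le_trans (natDegree_sub_le _ _) ?_
    simp [natDegree_C_mul_X _ (hne l)]
  have hdegL : L.natDegree ≤ k := by
    refine le_trans (natDegree_mul_le) ?_
    rw [natDegree_C, natDegree_X_pow]
    omega
  have hdegR : R.natDegree ≤ 2 * k - 1 := by
    rw [hR]
    refine le_trans (natDegree_sum_le _ _) ?_
    rw [Finset.fold_max_le]
    constructor
    · omega
    · intro j _
      refine le_trans (natDegree_add_le _ _) ?_
      rw [max_le_iff]
      constructor
      · refine le_trans (natDegree_mul_le) ?_
        refine le_trans (add_le_add (natDegree_C _).le (le_trans natDegree_mul_le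
          (add_le_add (hdeg1 _) (hdeg2 _)))) ?_
        simp [hcardE j]
        omega
      · refine le_trans (natDegree_mul_le) ?_
        refine le_trans (add_le_add (natDegree_C _).le (le_trans natDegree_mul_le
          (add_le_add (hdeg2 _) (hdeg1 _)))) ?_
        simp [hcardE j]
        omega
  have hA : ∀ j, (∏ l ∈ Finset.univ.erase j, (1 - lam j * lam l)) ≠ 0 := fun j =>
    Finset.prod_ne_zero_iff.2 fun l _ => h1 j l
  have hB : ∀ j, (∏ l ∈ Finset.univ.erase j, (lam j - lam l)) ≠ 0 := fun j =>
    Finset.prod_ne_zero_iff.2 fun l hl => h2 j l (Ne.symm (Finset.mem_erase.1 hl).1)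
  -- residue identity for D
  have hDalt : ∀ j, Dd j * ((∏ l, (1 - lam l * lam j)) * ∏ l ∈ Finset.univ.erase j, (lam j - lam l))
      = (∏ l, (1 - lam l ^ 2)) * lam j ^ k := by
    intro j
    have e1 : (∏ l, (1 - lam l * lam j)) = ∏ l, (1 - lam j * lam l) :=
      Finset.prod_congr rfl (fun l _ => by ring)
    have hden : ((∏ l, (1 - lam j * lam l)) * ∏ l ∈ Finset.univ.erase j, (lam j - lam l)) ≠ 0 :=
      mul_ne_zero (Finset.prod_ne_zero_iff.2 fun l _ => h1 j l) (hB j)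
    rw [e1, hD j, div_mul_cancel₀ _ hden]
    ring
  -- residue identity for C
  have hCalt : ∀ j, Cc j * ((∏ l, ((lam j)⁻¹ - lam l)) *
        ∏ l ∈ Finset.univ.erase j, (1 - lam l * (lam j)⁻¹))
      = (∏ l, (1 - lam l ^ 2)) * ((lam j)⁻¹) ^ k := by
    intro j
    have hj := hne j
    have e1 : (∏ l, ((lam j)⁻¹ - lam l)) = (∏ l, (1 - lam j * lam l)) * ((lam j)⁻¹) ^ k :=
      calc (∏ l, ((lam j)⁻¹ - lam l)) = ∏ l, ((1 - lam j * lam l) * (lam j)⁻¹) :=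
            Finset.prod_congr rfl (fun l _ => by field_simp)
        _ = (∏ l, (1 - lam j * lam l)) * ∏ _l : Fin k, (lam j)⁻¹ := Finset.prod_mul_distrib
        _ = (∏ l, (1 - lam j * lam l)) * ((lam j)⁻¹) ^ k := by
            rw [Finset.prod_const, Finset.card_univ, Fintype.card_fin]
    have e2 : (∏ l ∈ Finset.univ.erase j, (1 - lam l * (lam j)⁻¹))
        = (∏ l ∈ Finset.univ.erase j, (lam j - lam l)) * ((lam j)⁻¹) ^ (k - 1) :=
      calc (∏ l ∈ Finset.univ.erase j, (1 - lam l * (lam j)⁻¹))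
          = ∏ l ∈ Finset.univ.erase j, ((lam j - lam l) * (lam j)⁻¹) :=
            Finset.prod_congr rfl (fun l _ => by field_simp)
        _ = (∏ l ∈ Finset.univ.erase j, (lam j - lam l)) *
              ∏ _l ∈ Finset.univ.erase j, (lam j)⁻¹ := Finset.prod_mul_distrib
        _ = _ := by rw [Finset.prod_const, hcardE j]
    have e3 : (∏ l, (1 - lam j * lam l))
        = (1 - lam j ^ 2) * ∏ l ∈ Finset.univ.erase j, (1 - lam j * lam l) := by
      rw [← Finset.mul_prod_erase Finset.univ _ (Finset.mem_univ j), sq]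
    have e4 : (∏ l, (1 - lam l ^ 2))
        = (1 - lam j ^ 2) * ∏ l ∈ Finset.univ.erase j, (1 - lam l ^ 2) :=
      (Finset.mul_prod_erase Finset.univ _ (Finset.mem_univ j)).symm
    have e0 : (∏ l ∈ Finset.univ.erase j,
          (1 - lam l ^ 2) / ((lam j - lam l) * (1 - lam j * lam l)))
        = (∏ l ∈ Finset.univ.erase j, (1 - lam l ^ 2)) /
          ((∏ l ∈ Finset.univ.erase j, (lam j - lam l)) *
           (∏ l ∈ Finset.univ.erase j, (1 - lam j * lam l))) := by
      rw [Finset.prod_div_distrib, Finset.prod_mul_distrib]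
    rw [hC j, e0, e1, e2, e3, e4]
    field_simp [hA j, hB j]
    have hp : lam j ^ (k - 1) * (lam j)⁻¹ ^ (k - 1) = 1 := by
      rw [← mul_pow, mul_inv_cancel₀ hj, one_pow]
    linear_combination ((∏ x ∈ univ.erase j, (1 - lam x ^ 2)) - lam j ^ 2 * ∏ x ∈ univ.erase j, (1 - lam x ^ 2)) * hp
  -- the two polynomials agree
  have hLR : L = R := by
    rw [← sub_eq_zero]
    apply eq_zero_of_natDegree_lt_card_of_eval_eq_zero (L - R)
      (f := Sum.elim lam (fun i => (lam i)⁻¹))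
    · rintro (i | i) (j | j) h <;>
        simp only [Sum.elim_inl, Sum.elim_inr] at h
      · exact congrArg Sum.inl (hdist h)
      · exfalso
        refine hprod i j ?_
        rw [h]
        exact inv_mul_cancel₀ (hne j)
      · exfalso
        refine hprod j i ?_
        rw [← h]
        exact inv_mul_cancel₀ (hne i)
      · exact congrArg Sum.inr (hdist (inv_injective h))
    · rintro (j | j) <;> rw [eval_sub, sub_eq_zero]
      · -- x = lam j
        simp only [Sum.elim_inl, hL, hR, eval_mul, eval_pow, eval_C, eval_X, eval_finset_sum,
          eval_add, eval_prod, eval_sub, eval_one]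
        rw [Finset.sum_eq_single j]
        · rw [Finset.prod_eq_zero (f := fun l => lam j - lam l) (Finset.mem_univ j) (sub_self (lam j)), zero_mul, mul_zero,
            zero_add, hDalt j]
        · intro i _ hij
          rw [Finset.prod_eq_zero (f := fun l => lam j - lam l) (Finset.mem_univ j) (sub_self (lam j)), zero_mul, mul_zero,
            Finset.prod_eq_zero (f := fun l => lam j - lam l) (Finset.mem_erase.2 ⟨Ne.symm hij, Finset.mem_univ j⟩) (sub_self (lam j)), mul_zero, mul_zero, add_zero]
        · intro h; exact absurd (Finset.mem_univ j) h
      · -- x = (lam j)⁻¹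
        simp only [Sum.elim_inr, hL, hR, eval_mul, eval_pow, eval_C, eval_X, eval_finset_sum,
          eval_add, eval_prod, eval_sub, eval_one]
        have hz : (1 : ℂ) - lam j * (lam j)⁻¹ = 0 := by
          rw [mul_inv_cancel₀ (hne j), sub_self]
        rw [Finset.sum_eq_single j]
        · rw [Finset.prod_eq_zero (f := fun l => 1 - lam l * (lam j)⁻¹) (Finset.mem_univ j) hz, zero_mul, mul_zero, add_zero, hCalt j]
        · intro i _ hij
          rw [Finset.prod_eq_zero (f := fun l => 1 - lam l * (lam j)⁻¹) (Finset.mem_univ j) hz, zero_mul, mul_zero,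
            Finset.prod_eq_zero (f := fun l => 1 - lam l * (lam j)⁻¹) (Finset.mem_erase.2 ⟨Ne.symm hij, Finset.mem_univ j⟩) hz,
            mul_zero, mul_zero, add_zero]
        · intro h; exact absurd (Finset.mem_univ j) h
    · refine lt_of_le_of_lt (natDegree_sub_le _ _) ?_
      rw [Fintype.card_sum, Fintype.card_fin]
      exact max_lt (by omega) (by omega)
  -- evaluate at x
  have := congrArg (eval x) hLR
  simpa only [hL, hR, eval_mul, eval_pow, eval_C, eval_X, eval_finset_sum, eval_add,
    eval_prod, eval_sub, eval_one] using this

/-- Partial-fraction decomposition of the product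
∏_ℓ (1/(1-tλ_ℓ) + (λ_ℓ/t)/(1-λ_ℓ/t)) on the annulus max|λ| < |t| < min|λ|⁻¹,
with the explicit residue coefficients C_j. -/
theorem stmt3 (k : ℕ) (hk : 1 ≤ k) (lam : Fin k → ℂ)
    (hlam : ∀ i, ‖lam i‖ < 1) (hne : ∀ i, lam i ≠ 0)
    (hdist : Function.Injective lam)
    (hprod : ∀ i j, lam i * lam j ≠ 1) :
    ∃ C D : Fin k → ℂ,
      (∀ j, C j = lam j ^ (k - 1) *
        ∏ l ∈ Finset.univ.erase j,
          (1 - lam l ^ 2) / ((lam j - lam l) * (1 - lam j * lam l))) ∧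
      ∀ t : ℂ, t ≠ 0 → (∀ i, ‖lam i‖ < ‖t‖) → (∀ i, ‖t‖ * ‖lam i‖ < 1) →
        ∏ l, (1 / (1 - t * lam l) + (lam l / t) / (1 - lam l / t))
          = ∑ j, (C j / (1 - t * lam j) + D j / (t - lam j)) := by
  classical
  refine ⟨fun j => lam j ^ (k - 1) *
      ∏ l ∈ Finset.univ.erase j,
        (1 - lam l ^ 2) / ((lam j - lam l) * (1 - lam j * lam l)),
    fun j => lam j ^ k * (∏ l, (1 - lam l ^ 2)) /
      ((∏ l, (1 - lam j * lam l)) * ∏ l ∈ Finset.univ.erase j, (lam j - lam l)),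
    fun j => rfl, ?_⟩
  intro t ht0 htl htu
  set Cc : Fin k → ℂ := fun j => lam j ^ (k - 1) *
      ∏ l ∈ Finset.univ.erase j,
        (1 - lam l ^ 2) / ((lam j - lam l) * (1 - lam j * lam l)) with hCc
  set Dd : Fin k → ℂ := fun j => lam j ^ k * (∏ l, (1 - lam l ^ 2)) /
      ((∏ l, (1 - lam j * lam l)) * ∏ l ∈ Finset.univ.erase j, (lam j - lam l)) with hDd
  have h1t : ∀ l, (1 : ℂ) - t * lam l ≠ 0 := by
    intro l h
    rw [sub_eq_zero] at h
    have h2 : ‖t * lam l‖ < 1 := by rw [norm_mul]; exact htu l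
    rw [← h] at h2
    simp at h2
  have h2t : ∀ l, t - lam l ≠ 0 := by
    intro l h
    rw [sub_eq_zero] at h
    have := htl l
    rw [h] at this
    exact lt_irrefl _ this
  have h1t' : ∀ l, (1 : ℂ) - lam l * t ≠ 0 := fun l => by rw [mul_comm]; exact h1t l
  have hfac : ∀ l, 1 / (1 - t * lam l) + (lam l / t) / (1 - lam l / t)
      = (t * (1 - lam l ^ 2)) / ((1 - lam l * t) * (t - lam l)) := by
    intro l
    have h3 : (1 : ℂ) - lam l / t ≠ 0 := by
      have e : (1 : ℂ) - lam l / t = (t - lam l) / t := by field_simp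
      rw [e]
      exact div_ne_zero (h2t l) ht0
    field_simp [h1t l, h2t l, h1t' l, h3]
    ring
  have hkey := stmt3_key k hk lam hne hdist hprod Cc Dd (fun j => rfl) (fun j => rfl) t
  have hQ : (∏ l, ((1:ℂ) - lam l * t)) ≠ 0 := Finset.prod_ne_zero_iff.2 fun l _ => h1t' l
  have hP : (∏ l, (t - lam l)) ≠ 0 := Finset.prod_ne_zero_iff.2 fun l _ => h2t l
  calc ∏ l, (1 / (1 - t * lam l) + (lam l / t) / (1 - lam l / t))
      = ∏ l, ((t * (1 - lam l ^ 2)) / ((1 - lam l * t) * (t - lam l))) :=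
        Finset.prod_congr rfl (fun l _ => hfac l)
    _ = (∏ l, (t * (1 - lam l ^ 2))) / ∏ l, ((1 - lam l * t) * (t - lam l)) :=
        Finset.prod_div_distrib _ _
    _ = ((∏ l, (1 - lam l ^ 2)) * t ^ k) /
          ((∏ l, (1 - lam l * t)) * ∏ l, (t - lam l)) := by
        rw [Finset.prod_mul_distrib, Finset.prod_mul_distrib, Finset.prod_const,
          Finset.card_univ, Fintype.card_fin, mul_comm (t ^ k)]
    _ = (∑ j, (Cc j * ((∏ l, (t - lam l)) * ∏ l ∈ Finset.univ.erase j, (1 - lam l * t))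
          + Dd j * ((∏ l, (1 - lam l * t)) * ∏ l ∈ Finset.univ.erase j, (t - lam l)))) /
          ((∏ l, (1 - lam l * t)) * ∏ l, (t - lam l)) := by rw [hkey]
    _ = ∑ j, (Cc j / (1 - t * lam j) + Dd j / (t - lam j)) := by
        rw [Finset.sum_div]
        refine Finset.sum_congr rfl (fun j _ => ?_)
        rw [← Finset.mul_prod_erase Finset.univ (fun l => (1:ℂ) - lam l * t)
            (Finset.mem_univ j),
          ← Finset.mul_prod_erase Finset.univ (fun l => t - lam l) (Finset.mem_univ j)]
        have hQj : (∏ l ∈ Finset.univ.erase j, ((1:ℂ) - lam l * t)) ≠ 0 :=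
          Finset.prod_ne_zero_iff.2 fun l _ => h1t' l
        have hPj : (∏ l ∈ Finset.univ.erase j, (t - lam l)) ≠ 0 :=
          Finset.prod_ne_zero_iff.2 fun l _ => h2t l
        have e1 : (1 : ℂ) - lam j * t = 1 - t * lam j := by ring
        have hQj' : (∏ l ∈ Finset.univ.erase j, ((1:ℂ) - t * lam l)) ≠ 0 :=
          Finset.prod_ne_zero_iff.2 fun l _ => h1t l
        field_simp [h1t j, h2t j, e1, hQj']
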